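/- Let μ, α, β, a be real numbers and n ≥ 2 a positive integer satisfying: α ≥ β; μ + α + (n−2)β ≥ 0; μα + (n−2)μβ − (n−1)a² ≥ 0; μ + (n−1)α > 0; and (α − β)·[μα + (n−2)μβ − (n−1)a²] = 0. If moreover α = β and μα ≠ a², then g(x₁,…,xₙ) = 0 if and only if x₁ = 0 and ∑_{i=2}^{n} xᵢ = 0. -/

import Mathlib

open Finset

/-- The quadratic form
`g(x₁,…,xₙ) = μx₁² + α·∑_{i=2}^{n} xᵢ² + 2a·∑_{i=2}^{n} x₁xᵢ + 2β·∑_{2≤i<j≤n} xᵢxⱼ`. -/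
def quadFormG (n : ℕ) (μ α β a : ℝ) (x : ℕ → ℝ) : ℝ :=
    μ * x 1 ^ 2 + α * ∑ i ∈ Icc 2 n, x i ^ 2
    + 2 * a * ∑ i ∈ Icc 2 n, x 1 * x i
    + 2 * β * ∑ i ∈ Icc 2 n, ∑ j ∈ Icc (i + 1) n, x i * x j

lemma sq_sum_Icc (x : ℕ → ℝ) : ∀ n : ℕ,
    (∑ i ∈ Icc 2 n, x i) ^ 2
      = ∑ i ∈ Icc 2 n, x i ^ 2
        + 2 * ∑ i ∈ Icc 2 n, ∑ j ∈ Icc (i + 1) n, x i * x j := by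
  intro n
  induction n with
  | zero => simp
  | succ n ih =>
    rcases Nat.lt_or_ge n 1 with h | h
    · interval_cases n <;> simp
    · have hins : Icc 2 (n + 1) = insert (n + 1) (Icc 2 n) :=
        (Finset.insert_Icc_right_eq_Icc_add_one (by omega)).symm
      have hnot : (n + 1) ∉ Icc 2 n := by simp
      have hinner : ∀ i ∈ Icc 2 n,
          ∑ j ∈ Icc (i + 1) (n + 1), x i * x j
            = (∑ j ∈ Icc (i + 1) n, x i * x j) + x i * x (n + 1) := by
        intro i hi
        have hi' : i ≤ n := (mem_Icc.mp hi).2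
        rw [← Finset.insert_Icc_right_eq_Icc_add_one (by omega : i + 1 ≤ n + 1),
          Finset.sum_insert (by simp)]
        ring
      rw [hins, Finset.sum_insert hnot, Finset.sum_insert hnot,
        Finset.sum_insert hnot, Finset.sum_congr rfl hinner]
      have : Icc (n + 1 + 1) (n + 1) = ∅ := by
        rw [Finset.Icc_eq_empty_iff]; omega
      rw [this, Finset.sum_empty, Finset.sum_add_distrib, ← Finset.sum_mul]
      nlinarith [ih]

theorem quadFormG_eq_zero_iff_B2 (n : ℕ) (μ α β a : ℝ)
    (hn : 2 ≤ n)
    (hA1 : α ≥ β)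
    (hA2 : μ + α + ((n : ℝ) - 2) * β ≥ 0)
    (hA3 : μ * α + ((n : ℝ) - 2) * μ * β - ((n : ℝ) - 1) * a ^ 2 ≥ 0)
    (hA4 : μ + ((n : ℝ) - 1) * α > 0)
    (hA5 : (α - β) * (μ * α + ((n : ℝ) - 2) * μ * β - ((n : ℝ) - 1) * a ^ 2) = 0)
    (hb1 : α = β) (hb2 : μ * α ≠ a ^ 2) :
    ∀ x : ℕ → ℝ, quadFormG n μ α β a x = 0 ↔
      x 1 = 0 ∧ ∑ i ∈ Icc 2 n, x i = 0 := by
  subst hb1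
  have hn1 : (1 : ℝ) ≤ (n : ℝ) - 1 := by
    have : (2 : ℝ) ≤ (n : ℝ) := by exact_mod_cast hn
    linarith
  have hdet : μ * α - a ^ 2 > 0 := by
    rcases lt_or_eq_of_le (by nlinarith : (0:ℝ) ≤ μ * α - a ^ 2) with h | h
    · exact h
    · exact absurd (by linarith) hb2
  have hμ : 0 < μ := by
    by_contra h
    push_neg at h
    have hα : α < 0 := by nlinarith [sq_nonneg a]
    nlinarith [mul_nonneg (by linarith : (0:ℝ) ≤ (n:ℝ) - 2) (by linarith : (0:ℝ) ≤ -α)]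
  intro x
  set S := ∑ i ∈ Icc 2 n, x i with hS
  have hg : quadFormG n μ α α a x = μ * x 1 ^ 2 + 2 * a * (x 1 * S) + α * S ^ 2 := by
    unfold quadFormG
    rw [← Finset.mul_sum]
    nlinarith [sq_sum_Icc x n]
  rw [hg]
  constructor
  · intro h
    have hS0 : S = 0 := by
      have h2 : (μ * α - a ^ 2) * S ^ 2 ≤ 0 := by
        nlinarith [sq_nonneg (μ * x 1 + a * S)]
      have : S ^ 2 = 0 := by nlinarith [sq_nonneg S]
      exact pow_eq_zero_iff (by norm_num) |>.mp this
    refine ⟨?_, hS0⟩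
    rw [hS0] at h
    have : μ * x 1 ^ 2 = 0 := by linarith [h]; 
    have hx2 : x 1 ^ 2 = 0 := by
      rcases mul_eq_zero.mp this with h' | h'
      · linarith
      · exact h'
    exact pow_eq_zero_iff (by norm_num) |>.mp hx2
  · rintro ⟨h1, h2⟩
    rw [h1, h2]; ring
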